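/- Let M be a positive integer, let p, p̃ ∈ ℝ^M have strictly positive entries, and let Φ, Φ̃ ∈ ℝ^{M×M} satisfy Φᵀ diag(p) Φ = I and Φ̃ᵀ diag(p̃) Φ̃ = I. Suppose Λ and Λ̃ are diagonal M × M matrices with strictly positive diagonal entries such that Φ Λ Φᵀ = Φ̃ Λ̃ Φ̃ᵀ. Define Ã = Φ̃ᵀ diag(p̃) Φ, the overlap matrix 𝒪 = Φᵀ diag(p̃) Φ, and U = Λ^{1/2} Ãᵀ Λ̃^{-1/2}. Then U is orthogonal (Uᵀ U = I) and Λ^{1/2} 𝒪 Λ^{1/2} = U Λ̃ Uᵀ. -/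

import Mathlib

open Matrix

/-- With the two-measure orthonormality relations, diagonal positive
eigenvalue matrices `Λ = diag l`, `Λ̃ = diag l̃` satisfying `Φ Λ Φᵀ = Φ̃ Λ̃ Φ̃ᵀ`,
cross-overlap `Ã = Φ̃ᵀ diag(p̃) Φ`, overlap `𝒪 = Φᵀ diag(p̃) Φ`, and
`U = Λ^{1/2} Ãᵀ Λ̃^{-1/2}`, the matrix `U` is orthogonal and
`Λ^{1/2} 𝒪 Λ^{1/2} = U Λ̃ Uᵀ`. -/
theorem stmt_6 {M : ℕ} (hM : 0 < M)
    (p pt : Fin M → ℝ) (hp : ∀ i, 0 < p i) (hpt : ∀ i, 0 < pt i)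
    (Φ Φt : Matrix (Fin M) (Fin M) ℝ)
    (hΦ : Φᵀ * diagonal p * Φ = 1) (hΦt : Φtᵀ * diagonal pt * Φt = 1)
    (l lt : Fin M → ℝ) (hl : ∀ i, 0 < l i) (hlt : ∀ i, 0 < lt i)
    (hK : Φ * diagonal l * Φᵀ = Φt * diagonal lt * Φtᵀ) :
    let At : Matrix (Fin M) (Fin M) ℝ := Φtᵀ * diagonal pt * Φ
    let O : Matrix (Fin M) (Fin M) ℝ := Φᵀ * diagonal pt * Φ
    let Lhalf : Matrix (Fin M) (Fin M) ℝ := diagonal fun i => Real.sqrt (l i)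
    let LtInvHalf : Matrix (Fin M) (Fin M) ℝ := diagonal fun i => (Real.sqrt (lt i))⁻¹
    let U : Matrix (Fin M) (Fin M) ℝ := Lhalf * Atᵀ * LtInvHalf
    Uᵀ * U = 1 ∧ Lhalf * O * Lhalf = U * diagonal lt * Uᵀ := by
  intro At O Lhalf LtInvHalf U
  -- right inverse for Φt
  have h2r : Φt * (Φtᵀ * diagonal pt) = 1 := by
    rw [mul_eq_one_comm]; exact hΦt
  have hAtT : Atᵀ = Φᵀ * diagonal pt * Φt := by
    show (Φtᵀ * diagonal pt * Φ)ᵀ = _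
    simp [Matrix.transpose_mul, Matrix.mul_assoc]
  -- key : At * Λ * Atᵀ = Λ̃
  have key : At * diagonal l * Atᵀ = diagonal lt := by
    have : At * diagonal l * Atᵀ
        = Φtᵀ * diagonal pt * (Φ * diagonal l * Φᵀ) * (diagonal pt * Φt) := by
      rw [hAtT]; show Φtᵀ * diagonal pt * Φ * diagonal l * (Φᵀ * diagonal pt * Φt) = _
      simp only [Matrix.mul_assoc]
    rw [this, hK]
    calc Φtᵀ * diagonal pt * (Φt * diagonal lt * Φtᵀ) * (diagonal pt * Φt)
        = (Φtᵀ * diagonal pt * Φt) * diagonal lt * (Φtᵀ * diagonal pt * Φt) := by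
          simp only [Matrix.mul_assoc]
      _ = diagonal lt := by rw [hΦt]; simp
  -- Atᵀ * At = O
  have hO : Atᵀ * At = O := by
    rw [hAtT]
    show Φᵀ * diagonal pt * Φt * (Φtᵀ * diagonal pt * Φ) = O
    calc Φᵀ * diagonal pt * Φt * (Φtᵀ * diagonal pt * Φ)
        = Φᵀ * diagonal pt * ((Φt * (Φtᵀ * diagonal pt)) * Φ) := by
          simp only [Matrix.mul_assoc]
      _ = O := by rw [h2r]; simp [O, Matrix.mul_assoc]
  -- diagonal arithmetic
  have hLL : Lhalf * Lhalf = diagonal l := by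
    have h : (fun i => Real.sqrt (l i) * Real.sqrt (l i)) = l :=
      funext fun i => Real.mul_self_sqrt (hl i).le
    simp only [Lhalf, Matrix.diagonal_mul_diagonal, h]
  have hLt3 : LtInvHalf * diagonal lt * LtInvHalf = 1 := by
    have h : (fun i => (Real.sqrt (lt i))⁻¹ * lt i * (Real.sqrt (lt i))⁻¹) =
        fun _ => (1 : ℝ) := by
      funext i
      have hs : Real.sqrt (lt i) ≠ 0 := ne_of_gt (Real.sqrt_pos.mpr (hlt i))
      have hm : Real.sqrt (lt i) * Real.sqrt (lt i) = lt i :=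
        Real.mul_self_sqrt (hlt i).le
      field_simp
      exact (Real.sq_sqrt (hlt i).le).symm
    simp only [LtInvHalf, Matrix.diagonal_mul_diagonal, h, Matrix.diagonal_one]
  have hUT : Uᵀ = LtInvHalf * At * Lhalf := by
    show (Lhalf * Atᵀ * LtInvHalf)ᵀ = _
    simp [Matrix.transpose_mul, Lhalf, LtInvHalf, Matrix.mul_assoc]
  constructor
  · calc Uᵀ * U = LtInvHalf * (At * diagonal l * Atᵀ) * LtInvHalf := by
          rw [hUT]
          show LtInvHalf * At * Lhalf * (Lhalf * Atᵀ * LtInvHalf) = _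
          calc LtInvHalf * At * Lhalf * (Lhalf * Atᵀ * LtInvHalf)
              = LtInvHalf * (At * ((Lhalf * Lhalf) * Atᵀ)) * LtInvHalf := by
                simp only [Matrix.mul_assoc]
            _ = _ := by rw [hLL]; simp only [Matrix.mul_assoc]
      _ = 1 := by rw [key]; exact hLt3
  · calc Lhalf * O * Lhalf
        = Lhalf * (Atᵀ * At) * Lhalf := by rw [hO]
      _ = Lhalf * Atᵀ * (LtInvHalf * diagonal lt * LtInvHalf) * (At * Lhalf) := by
          rw [hLt3]; simp only [Matrix.mul_assoc, Matrix.one_mul, Matrix.mul_one]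
      _ = U * diagonal lt * Uᵀ := by
          rw [hUT]; simp only [U, Matrix.mul_assoc]
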